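/- (Graded-piece computation from the proof of the trace estimate in §3.) Let n ≥ 1 and s ≥ 1 be integers with m := min(v_p(s), n) ≤ n−1, and set s₀ := s/p^m. Then the map O → fil^log_s Wₙ(L) / fil_s Wₙ(L) sending x to the class of V^{n−m−1}([x·z^{−s₀}]) is a surjective homomorphism of additive groups whose kernel is exactly 𝔪; in particular it induces an isomorphism of abelian groups κ ≅ fil^log_s Wₙ(L) / fil_s Wₙ(L). -/

import Mathlib

set_option maxHeartbeats 1200000

noncomputable section

open scoped Classical

/-- A discretely valued field: a field `L` together with a normalized additive valuation
`v : L → ℤ ∪ {∞}` and a uniformizer `z` (so `v z = 1`).  The valuation ring is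
`O = {a : L | 0 ≤ v a}`, with maximal ideal `𝔪 = {a : L | 1 ≤ v a}`. -/
structure DVField (L : Type) [Field L] : Type where
  v : L → WithTop ℤ
  z : L
  v_top : ∀ a : L, v a = ⊤ ↔ a = 0
  v_mul : ∀ a b : L, v (a * b) = v a + v b
  v_add : ∀ a b : L, min (v a) (v b) ≤ v (a + b)
  v_z : v z = 1

namespace DVField

variable {L : Type} [Field L]

/-- `Wₙ(O) ⊆ Wₙ(L)`: the truncated Witt vectors all of whose components are integral. -/
def WO (D : DVField L) (p n : ℕ) : Set (TruncatedWittVector p n L) :=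
  {x | ∀ i : Fin n, 0 ≤ D.v (x.coeff i)}

/-- The Brylinski–Kato filtration
`fil^log_r Wₙ(L) = {(a₀, …, a_{n-1}) | p^{n-1-i} · v(aᵢ) ≥ -r for all i}`. -/
def filLog (D : DVField L) (p r n : ℕ) : Set (TruncatedWittVector p n L) :=
  {x | ∀ i : Fin n, (↑(-(r : ℤ)) : WithTop ℤ) ≤ p ^ (n - 1 - (i : ℕ)) • D.v (x.coeff i)}

end DVField

/-- The Verschiebung `V : Wₙ(L) → W_{n+1}(L)`, shifting components. -/
def wV {p : ℕ} {L : Type} [Field L] {n : ℕ} (x : TruncatedWittVector p n L) :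
    TruncatedWittVector p (n + 1) L :=
  TruncatedWittVector.mk p fun i =>
    if h : (i : ℕ) = 0 then 0 else x.coeff ⟨(i : ℕ) - 1, by have := i.isLt; omega⟩

/-- The iterated Verschiebung `V^{n-m} : W_m(L) → Wₙ(L)` (for `m ≤ n`), given by shifting
components by `n - m`. -/
def wVit {p : ℕ} {L : Type} [Field L] {m n : ℕ} (x : TruncatedWittVector p m L) :
    TruncatedWittVector p n L :=
  TruncatedWittVector.mk p fun i =>
    if h : n - m ≤ (i : ℕ) ∧ (i : ℕ) - (n - m) < m then x.coeff ⟨(i : ℕ) - (n - m), h.2⟩ else 0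

/-- The restriction `R : W_{n+1}(L) → Wₙ(L)`, dropping the last component. -/
def wR {p : ℕ} {L : Type} [Field L] {n : ℕ} (x : TruncatedWittVector p (n + 1) L) :
    TruncatedWittVector p n L :=
  TruncatedWittVector.mk p fun i => x.coeff i.castSucc

/-- The iterated restriction `R^{m-n} : W_m(L) → Wₙ(L)` (for `n ≤ m`), keeping the first `n`
components. -/
def wRes {p : ℕ} {L : Type} [Field L] {m n : ℕ} (x : TruncatedWittVector p m L) :
    TruncatedWittVector p n L :=
  TruncatedWittVector.mk p fun i => if h : (i : ℕ) < m then x.coeff ⟨(i : ℕ), h⟩ else 0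

/-- The Frobenius `F : W_{n+1}(L) → Wₙ(L)` in characteristic `p`:
componentwise `p`-th power followed by restriction. -/
def wF {p : ℕ} {L : Type} [Field L] {n : ℕ} (x : TruncatedWittVector p (n + 1) L) :
    TruncatedWittVector p n L :=
  TruncatedWittVector.mk p fun i => x.coeff i.castSucc ^ p

/-- The Teichmüller lift `[a] = (a, 0, …, 0)`. -/
def wT (p : ℕ) {L : Type} [Field L] (n : ℕ) (a : L) : TruncatedWittVector p n L :=
  TruncatedWittVector.mk p fun i => if (i : ℕ) = 0 then a else 0

/-- The map `p̲ : Wₙ(L) → W_{n+1}(L)`: lift to length `n+1` (by appending a zero component)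
and multiply by `p`. -/
def wP {p : ℕ} [Fact p.Prime] {L : Type} [Field L] {n : ℕ} (x : TruncatedWittVector p n L) :
    TruncatedWittVector p (n + 1) L :=
  p • (wRes x : TruncatedWittVector p (n + 1) L)

namespace DVField

variable {L : Type} [Field L]

/-- The Kato–Matsuda filtration
`fil_r Wₙ(L) = fil^log_{r-1} Wₙ(L) + V^{n-m}(fil^log_r W_m(L))` where `m = min(v_p(r), n)`,
and `fil_0 Wₙ(L) = Wₙ(O)`. -/
def filKM (D : DVField L) (p : ℕ) [Fact p.Prime] (r n : ℕ) :
    Set (TruncatedWittVector p n L) :=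
  if r = 0 then D.WO p n
  else {x | ∃ a ∈ D.filLog p (r - 1) n,
    ∃ b ∈ D.filLog p r (min (padicValNat p r) n), x = a + wVit b}

/-- The `p`-saturation `Fil^p_r Wₙ(L) = Σ_{s=0}^{n-1} p^s · fil_{r·p^s} Wₙ(L)`. -/
def FilP (D : DVField L) (p : ℕ) [Fact p.Prime] (r n : ℕ) :
    Set (TruncatedWittVector p n L) :=
  {x | ∃ f : Fin n → TruncatedWittVector p n L,
      (∀ s : Fin n, f s ∈ D.filKM p (r * p ^ (s : ℕ)) n) ∧
      x = ∑ s : Fin n, p ^ (s : ℕ) • f s}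

end DVField

/-- The map `O → Wₙ(L)`, `x ↦ V^{n-m-1}([x · z^{-s₀}])`, where `m = min(v_p(s), n)` and
`s₀ = s/p^m`. -/
def DVField.twMap {L : Type} [Field L] (D : DVField L) (p n s : ℕ) (x : L) :
    TruncatedWittVector p n L :=
  wVit (wT p (min (padicValNat p s) n + 1)
    (x * (D.z ^ (s / p ^ min (padicValNat p s) n))⁻¹))


section StatementAux

open WittVector

variable {p : ℕ} [hp : Fact p.Prime]

private theorem teichAux1 {σ : Type*} (l : MvPolynomial σ ℚ)
    (x : WittVector p (MvPolynomial σ ℚ)) :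
    teichmuller p l * x = WittVector.mk p (fun i => l ^ p ^ i * x.coeff i) := by
  apply (ghostMap.bijective_of_invertible p _).injective
  funext n
  rw [RingHom.map_mul, Pi.mul_apply, ghostMap_apply, ghostMap_apply, ghostMap_apply,
    ghostComponent_teichmuller, ghostComponent_apply, ghostComponent_apply,
    aeval_wittPolynomial, aeval_wittPolynomial, Finset.mul_sum]
  simp only [WittVector.coeff_mk]
  apply Finset.sum_congr rfl
  intro i hi
  rw [Finset.mem_range] at hi
  rw [mul_pow, ← pow_mul]
  have : p ^ i * p ^ (n - i) = p ^ n := by rw [← pow_add]; congr 1; omega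
  rw [this]
  ring

private theorem teichAux2 {σ : Type*} (l : MvPolynomial σ ℤ)
    (x : WittVector p (MvPolynomial σ ℤ)) :
    teichmuller p l * x = WittVector.mk p (fun i => l ^ p ^ i * x.coeff i) := by
  apply WittVector.map_injective (MvPolynomial.map (Int.castRingHom ℚ))
    (MvPolynomial.map_injective _ Int.cast_injective)
  rw [RingHom.map_mul, WittVector.map_teichmuller, teichAux1]
  ext i
  simp [WittVector.map_coeff, WittVector.coeff_mk]

theorem teich_mul_coeff {R : Type*} [CommRing R] (l : R) (x : WittVector p R) (i : ℕ) :
    (teichmuller p l * x).coeff i = l ^ p ^ i * x.coeff i := by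
  classical
  let g : Option ℕ → R := fun o => o.elim l fun j => x.coeff j
  let φ : MvPolynomial (Option ℕ) ℤ →+* R := (MvPolynomial.aeval g).toRingHom
  have key := teichAux2 (p := p) (MvPolynomial.X (none : Option ℕ))
      (WittVector.mk p fun j : ℕ => (MvPolynomial.X (some j) : MvPolynomial (Option ℕ) ℤ))
  have hx : WittVector.map φ (WittVector.mk p fun j : ℕ =>
      (MvPolynomial.X (some j) : MvPolynomial (Option ℕ) ℤ)) = x := by
    ext j
    simp [φ, WittVector.map_coeff, WittVector.coeff_mk, g]
  have h2 := congrArg (WittVector.map φ) key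
  rw [RingHom.map_mul, WittVector.map_teichmuller, hx] at h2
  have hl : φ (MvPolynomial.X (none : Option ℕ)) = l := by simp [φ, g]
  rw [hl] at h2
  have hc := congrArg (fun y : WittVector p R => y.coeff i) h2
  simpa [WittVector.map_coeff, WittVector.coeff_mk, φ, g] using hc

theorem iterV_coeff {R : Type*} [CommRing R] (k : ℕ) (x : WittVector p R) (i : ℕ) :
    (verschiebung^[k] x).coeff i = if k ≤ i then x.coeff (i - k) else 0 := by
  induction k generalizing i with
  | zero => simp
  | succ k ih =>
    rw [Function.iterate_succ_apply']
    cases i with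
    | zero => rw [verschiebung_coeff_zero, if_neg (by omega)]
    | succ i =>
      rw [verschiebung_coeff_succ, ih]
      by_cases h : k ≤ i
      · rw [if_pos h, if_pos (by omega)]
        congr 1
        omega
      · rw [if_neg h, if_neg (by omega)]

theorem vtCoeff {R : Type*} [CommRing R] (k : ℕ) (c : R) (i : ℕ) :
    (verschiebung^[k] (teichmuller p c)).coeff i = if i = k then c else 0 := by
  rw [iterV_coeff]
  rcases lt_trichotomy i k with h | h | h
  · rw [if_neg (by omega), if_neg (by omega)]
  · subst h
    rw [if_pos le_rfl, Nat.sub_self, if_pos rfl]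
    exact teichmuller_coeff_zero p c
  · rw [if_pos (by omega), if_neg (by omega)]
    exact teichmuller_coeff_pos p c _ (by omega)

theorem iterV_sub {R : Type*} [CommRing R] (k : ℕ) (x y : WittVector p R) :
    verschiebung^[k] (x - y) = verschiebung^[k] x - verschiebung^[k] y := by
  induction k with
  | zero => simp
  | succ k ih =>
    rw [Function.iterate_succ_apply', Function.iterate_succ_apply',
      Function.iterate_succ_apply', ih, map_sub]

variable {L : Type} [Field L] (D : DVField L)

theorem v_zero' : D.v 0 = ⊤ := (D.v_top 0).mpr rfl

theorem v_int {a : L} (ha : a ≠ 0) : ∃ c : ℤ, D.v a = (c : WithTop ℤ) := by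
  cases h : D.v a with
  | top => exact absurd ((D.v_top a).mp h) ha
  | coe c => exact ⟨c, rfl⟩

theorem v_one' : D.v 1 = 0 := by
  have h := D.v_mul 1 1
  rw [mul_one] at h
  rcases v_int D (one_ne_zero : (1 : L) ≠ 0) with ⟨c, hc⟩
  rw [hc, ← WithTop.coe_add] at h
  have : c = c + c := WithTop.coe_eq_coe.mp h
  have hc0 : c = 0 := by omega
  rw [hc, hc0]
  simp

theorem v_neg' (a : L) : D.v (-a) = D.v a := by
  have h := D.v_mul (-1) a
  rw [neg_one_mul] at h
  have hm1 : D.v (-1) = 0 := by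
    have h2 := D.v_mul (-1) (-1)
    rw [neg_one_mul, neg_neg, v_one' D] at h2
    rcases v_int D (neg_ne_zero.mpr (one_ne_zero : (1 : L) ≠ 0)) with ⟨c, hc⟩
    rw [hc, ← WithTop.coe_add] at h2
    have : (0 : ℤ) = c + c := by exact_mod_cast h2
    have hc0 : c = 0 := by omega
    rw [hc, hc0]
    simp
  rw [h, hm1, zero_add]

theorem z_ne_zero : D.z ≠ 0 := by
  intro h
  have h1 := D.v_z
  rw [h, v_zero' D] at h1
  simp at h1

theorem v_zpow (k : ℕ) : D.v (D.z ^ k) = ((k : ℤ) : WithTop ℤ) := by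
  induction k with
  | zero => rw [pow_zero, v_one' D]; simp
  | succ k ih =>
    rw [pow_succ, D.v_mul, ih, D.v_z]
    rw [show (1 : WithTop ℤ) = ((1 : ℤ) : WithTop ℤ) from rfl, ← WithTop.coe_add]
    push_cast
    ring_nf

theorem v_zpow_inv (k : ℕ) : D.v ((D.z ^ k)⁻¹) = ((-(k : ℤ) : ℤ) : WithTop ℤ) := by
  have hzk : D.z ^ k ≠ 0 := pow_ne_zero _ (z_ne_zero D)
  have h := D.v_mul (D.z ^ k) (D.z ^ k)⁻¹
  rw [mul_inv_cancel₀ hzk, v_one' D, v_zpow D] at h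
  rcases v_int D (inv_ne_zero hzk) with ⟨c, hc⟩
  rw [hc, ← WithTop.coe_add] at h
  have : (0 : ℤ) = k + c := by exact_mod_cast h
  rw [hc]
  congr 1
  omega

theorem nsmul_coe' (k : ℕ) (c : ℤ) :
    k • ((c : WithTop ℤ)) = (((k : ℤ) * c : ℤ) : WithTop ℤ) := by
  induction k with
  | zero => simp
  | succ k ih =>
    rw [succ_nsmul, ih, ← WithTop.coe_add]
    congr 1
    push_cast
    ring

theorem nsmul_top' (k : ℕ) (hk : k ≠ 0) : k • (⊤ : WithTop ℤ) = ⊤ := by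
  cases k with
  | zero => omega
  | succ k => rw [succ_nsmul]; exact add_top _

/-- The valuation subring. -/
def valSubring : Subring L where
  carrier := {a | 0 ≤ D.v a}
  zero_mem' := by simp [Set.mem_setOf_eq, v_zero' D]
  one_mem' := by simp [Set.mem_setOf_eq, v_one' D]
  add_mem' := fun {a b} ha hb => le_trans (le_min ha hb) (D.v_add a b)
  mul_mem' := fun {a b} ha hb => by
    simp only [Set.mem_setOf_eq, D.v_mul] at *
    exact add_nonneg ha hb
  neg_mem' := fun {a} ha => by
    simp only [Set.mem_setOf_eq, v_neg' D] at *
    exact ha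

theorem mem_valSubring {a : L} : a ∈ valSubring D ↔ 0 ≤ D.v a := Iff.rfl

theorem zero_mem_filLog (r n : ℕ) : (0 : TruncatedWittVector p n L) ∈ D.filLog p r n := by
  intro i
  rw [TruncatedWittVector.coeff_zero, v_zero' D,
    nsmul_top' _ (pow_ne_zero _ hp.out.ne_zero)]
  exact le_top

theorem wVit_zero (m n : ℕ) :
    (wVit (0 : TruncatedWittVector p m L) : TruncatedWittVector p n L) = 0 := by
  apply TruncatedWittVector.ext
  intro i
  unfold wVit
  rw [TruncatedWittVector.coeff_mk, TruncatedWittVector.coeff_zero]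
  split_ifs with h
  · simp
  · rfl

theorem twMap_coeff (n s : ℕ) (hMn : padicValNat p s < n) (x : L) (i : Fin n) :
    (D.twMap p n s x).coeff i =
      if (i : ℕ) = n - 1 - padicValNat p s
      then x * (D.z ^ (s / p ^ padicValNat p s))⁻¹ else 0 := by
  have hmin : min (padicValNat p s) n = padicValNat p s := min_eq_left (le_of_lt hMn)
  unfold DVField.twMap wVit wT
  rw [TruncatedWittVector.coeff_mk, hmin]
  by_cases h1 : (i : ℕ) = n - 1 - padicValNat p s
  · rw [if_pos h1, dif_pos (by constructor <;> omega)]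
    rw [TruncatedWittVector.coeff_mk]
    have hi := i.isLt
    rw [if_pos (by simp only []; omega)]
  · rw [if_neg h1]
    have hi := i.isLt
    split_ifs with h2
    · rw [TruncatedWittVector.coeff_mk]
      split_ifs with h3
      · exfalso
        simp only [] at h3
        omega
      · rfl
    · rfl

theorem twMap_eq (n s : ℕ) (hMn : padicValNat p s < n) (x : L) :
    D.twMap p n s x = WittVector.truncate n
      (verschiebung^[n - 1 - padicValNat p s]
        (teichmuller p (x * (D.z ^ (s / p ^ padicValNat p s))⁻¹))) := by
  apply TruncatedWittVector.ext
  intro i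
  rw [twMap_coeff D n s hMn x i, WittVector.coeff_truncate, vtCoeff]

end StatementAux


/-- (Graded-piece computation.)  Let `n ≥ 1` and `s ≥ 1` with
`m := min(v_p(s), n) ≤ n-1` and `s₀ := s/p^m`.  The map `O → fil^log_s Wₙ(L)/fil_s Wₙ(L)`,
`x ↦ class of V^{n-m-1}([x·z^{-s₀}])`, is a surjective additive group homomorphism with
kernel exactly `𝔪`; in particular it induces an isomorphism `κ ≅ fil^log_s/fil_s`. -/
theorem statement12 (p : ℕ) [Fact p.Prime] (L : Type) [Field L] [CharP L p]
    (D : DVField L) (n s : ℕ) (hn : 1 ≤ n) (hs : 1 ≤ s)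
    (hm : min (padicValNat p s) n ≤ n - 1) :
    (∀ x : L, 0 ≤ D.v x → D.twMap p n s x ∈ D.filLog p s n) ∧
    (∀ x y : L, 0 ≤ D.v x → 0 ≤ D.v y →
      D.twMap p n s (x + y) - D.twMap p n s x - D.twMap p n s y ∈ D.filKM p s n) ∧
    (∀ w ∈ D.filLog p s n, ∃ x : L, 0 ≤ D.v x ∧ w - D.twMap p n s x ∈ D.filKM p s n) ∧
    (∀ x : L, 0 ≤ D.v x → (D.twMap p n s x ∈ D.filKM p s n ↔ 1 ≤ D.v x)) := by
  classical
  have hprime : p.Prime := Fact.out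
  have hppos : 0 < p := hprime.pos
  have hs0 : s ≠ 0 := by omega
  have hMn : padicValNat p s < n := by omega
  have hmin : min (padicValNat p s) n = padicValNat p s := min_eq_left (le_of_lt hMn)
  have hdvd : p ^ padicValNat p s ∣ s := pow_padicValNat_dvd
  have hps : p ^ padicValNat p s * (s / p ^ padicValNat p s) = s := Nat.mul_div_cancel' hdvd
  have hnd : ¬ p ^ (padicValNat p s + 1) ∣ s := pow_succ_padicValNat_not_dvd hs0
  have hz : D.z ≠ 0 := z_ne_zero D
  have hzeta : (D.z ^ (s / p ^ padicValNat p s)) ≠ 0 := pow_ne_zero _ hz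
  have hvzi : D.v (D.z ^ (s / p ^ padicValNat p s))⁻¹ = ((-((((s / p ^ padicValNat p s) : ℕ) : ℤ)) : ℤ) : WithTop ℤ) := v_zpow_inv D (s / p ^ padicValNat p s)
  have hpsZ : (p : ℤ) ^ padicValNat p s * (((s / p ^ padicValNat p s) : ℕ) : ℤ) = (s : ℤ) := by exact_mod_cast hps
  have hppowpos : (0:ℤ) < (p:ℤ) ^ padicValNat p s := by positivity
  have hvmul : ∀ x : L, x ≠ 0 → ∀ c : ℤ, D.v x = (c : WithTop ℤ) →
      D.v (x * (D.z ^ (s / p ^ padicValNat p s))⁻¹) = ((c - (((s / p ^ padicValNat p s) : ℕ) : ℤ) : ℤ) : WithTop ℤ) := by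
    intro x hx c hc
    rw [D.v_mul, hc, hvzi, ← WithTop.coe_add]
    exact congrArg _ (by ring)
  -- PART 1
  have part1 : ∀ x : L, 0 ≤ D.v x → D.twMap p n s x ∈ D.filLog p s n := by
    intro x hx
    simp only [DVField.filLog, Set.mem_setOf_eq]
    intro i
    rw [twMap_coeff D n s hMn x i]
    by_cases h1 : (i : ℕ) = n - 1 - padicValNat p s
    · rw [if_pos h1]
      by_cases hx0 : x = 0
      · rw [hx0, zero_mul, v_zero' D, nsmul_top' _ (pow_ne_zero _ hprime.ne_zero)]
        exact le_top
      · rcases v_int D hx0 with ⟨c, hc⟩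
        have hc0 : (0:ℤ) ≤ c := by rw [hc] at hx; exact_mod_cast hx
        rw [hvmul x hx0 c hc, show n - 1 - (i:ℕ) = padicValNat p s from by omega, nsmul_coe',
          WithTop.coe_le_coe]
        have h2 : (0:ℤ) ≤ (p:ℤ) ^ padicValNat p s * c := mul_nonneg (le_of_lt hppowpos) hc0
        push_cast
        nlinarith [hpsZ, h2]
    · rw [if_neg h1, v_zero' D, nsmul_top' _ (pow_ne_zero _ hprime.ne_zero)]
      exact le_top
  -- PART 2
  have part2 : ∀ x y : L, 0 ≤ D.v x → 0 ≤ D.v y →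
      D.twMap p n s (x + y) - D.twMap p n s x - D.twMap p n s y ∈ D.filKM p s n := by
    intro x y hx hy
    set E : WittVector p L := WittVector.teichmuller p ((x + y) * (D.z ^ (s / p ^ padicValNat p s))⁻¹) -
      WittVector.teichmuller p (x * (D.z ^ (s / p ^ padicValNat p s))⁻¹) - WittVector.teichmuller p (y * (D.z ^ (s / p ^ padicValNat p s))⁻¹) with hE
    have hxy : 0 ≤ D.v (x + y) := le_trans (le_min hx hy) (D.v_add x y)
    have hxO : x ∈ valSubring D := (mem_valSubring D).mpr hx
    have hyO : y ∈ valSubring D := (mem_valSubring D).mpr hy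
    have hxyO : x + y ∈ valSubring D := (mem_valSubring D).mpr hxy
    set G' : WittVector p (valSubring D) :=
      WittVector.teichmuller p (⟨x + y, hxyO⟩ : valSubring D) -
      WittVector.teichmuller p (⟨x, hxO⟩ : valSubring D) -
      WittVector.teichmuller p (⟨y, hyO⟩ : valSubring D) with hG'
    have hG : WittVector.map (valSubring D).subtype G' =
        WittVector.teichmuller p (x + y) - WittVector.teichmuller p x -
          WittVector.teichmuller p y := by
      rw [hG', map_sub, map_sub, WittVector.map_teichmuller, WittVector.map_teichmuller,
        WittVector.map_teichmuller]
      rfl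
    have hGint : ∀ i : ℕ, 0 ≤ D.v ((WittVector.teichmuller p (x + y) -
        WittVector.teichmuller p x - WittVector.teichmuller p y).coeff i) := by
      intro i
      rw [← hG, WittVector.map_coeff]
      exact (mem_valSubring D).mp (G'.coeff i).2
    have hEeq : E = WittVector.teichmuller p (D.z ^ (s / p ^ padicValNat p s))⁻¹ *
        (WittVector.teichmuller p (x + y) - WittVector.teichmuller p x -
          WittVector.teichmuller p y) := by
      have h3 : ∀ c : L, WittVector.teichmuller p (D.z ^ (s / p ^ padicValNat p s))⁻¹ * WittVector.teichmuller p c =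
          WittVector.teichmuller p (c * (D.z ^ (s / p ^ padicValNat p s))⁻¹) := by
        intro c
        rw [← map_mul, mul_comm]
      rw [hE, mul_sub, mul_sub, h3, h3, h3]
    have hEint : ∀ i : ℕ, ((-(((p ^ i * (s / p ^ padicValNat p s) : ℕ)) : ℤ) : ℤ) : WithTop ℤ) ≤ D.v (E.coeff i) := by
      intro i
      rw [hEeq, teich_mul_coeff, D.v_mul, inv_pow, ← pow_mul, v_zpow_inv D ((s / p ^ padicValNat p s) * p ^ i)]
      have h4 : ((-((((s / p ^ padicValNat p s) * p ^ i : ℕ)) : ℤ) : ℤ) : WithTop ℤ) =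
          ((-(((p ^ i * (s / p ^ padicValNat p s) : ℕ)) : ℤ) : ℤ) : WithTop ℤ) := by
        congr 1
        push_cast
        ring
      rw [h4]
      exact le_add_of_nonneg_right (hGint i)
    have hE0 : E.coeff 0 = 0 := by
      have h5 : WittVector.constantCoeff E = 0 := by
        rw [hE, map_sub, map_sub]
        simp only [WittVector.constantCoeff_apply, WittVector.teichmuller_coeff_zero]
        ring
      rw [WittVector.constantCoeff_apply] at h5
      exact h5
    rw [twMap_eq D n s hMn (x + y), twMap_eq D n s hMn x, twMap_eq D n s hMn y,
      ← map_sub, ← map_sub, ← iterV_sub, ← iterV_sub, ← hE]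
    simp only [DVField.filKM, if_neg hs0, Set.mem_setOf_eq]
    set B : TruncatedWittVector p (min (padicValNat p s) n) L :=
      TruncatedWittVector.mk p (fun j : Fin (min (padicValNat p s) n) => E.coeff ((j : ℕ) + 1)) with hBdef
    refine ⟨0, zero_mem_filLog D _ _, B, ?_, ?_⟩
    · simp only [DVField.filLog, Set.mem_setOf_eq]
      intro j
      rw [hBdef]
      simp only [TruncatedWittVector.coeff_mk]
      by_cases hz0 : E.coeff ((j:ℕ)+1) = 0
      · rw [hz0, v_zero' D, nsmul_top' _ (pow_ne_zero _ hprime.ne_zero)]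
        exact le_top
      · rcases v_int D hz0 with ⟨c, hc⟩
        have h6 := hEint ((j:ℕ)+1)
        rw [hc] at h6
        rw [hc, nsmul_coe', WithTop.coe_le_coe]
        have h7 : -(((p ^ ((j:ℕ)+1) * (s / p ^ padicValNat p s) : ℕ)) : ℤ) ≤ c := by exact_mod_cast h6
        have hj := j.isLt
        have h8 : (p:ℤ) ^ (min (padicValNat p s) n - 1 - (j:ℕ)) * ((p:ℤ) ^ ((j:ℕ)+1) * (((s / p ^ padicValNat p s) : ℕ):ℤ)) = (s:ℤ) := by
          rw [← mul_assoc, ← pow_add, show (min (padicValNat p s) n - 1 - (j:ℕ)) + ((j:ℕ)+1) = padicValNat p s from by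
            have := j.isLt; omega, hpsZ]
        have h9 := mul_le_mul_of_nonneg_left h7
          (by positivity : (0:ℤ) ≤ (p:ℤ) ^ (min (padicValNat p s) n - 1 - (j:ℕ)))
        push_cast at h7 h9 ⊢
        nlinarith [h8, h9]
    · rw [zero_add]
      apply TruncatedWittVector.ext
      intro i
      rw [WittVector.coeff_truncate, iterV_coeff]
      unfold wVit
      rw [hBdef]
      simp only [TruncatedWittVector.coeff_mk]
      have hi := i.isLt
      by_cases h1 : n - 1 - padicValNat p s ≤ (i:ℕ)
      · rw [if_pos h1]
        by_cases h2 : (i:ℕ) = n - 1 - padicValNat p s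
        · rw [show (i:ℕ) - (n - 1 - padicValNat p s) = 0 from by omega, hE0, dif_neg (by omega)]
        · rw [dif_pos (show n - (min (padicValNat p s) n) ≤ (i:ℕ) ∧ (i:ℕ) - (n - (min (padicValNat p s) n)) < min (padicValNat p s) n from
            ⟨by omega, by omega⟩)]
          congr 1
          omega
      · rw [if_neg h1, dif_neg (by omega)]
  -- PART 3
  have part3 : ∀ w ∈ D.filLog p s n, ∃ x : L, 0 ≤ D.v x ∧
      w - D.twMap p n s x ∈ D.filKM p s n := by
    intro w hw
    have hw' : ∀ i : Fin n, (↑(-(s:ℤ)) : WithTop ℤ) ≤ p ^ (n - 1 - (i:ℕ)) • D.v (w.coeff i) := hw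
    have hpf0 : n - 1 - padicValNat p s < n := by omega
    set i₀ : Fin n := ⟨n - 1 - padicValNat p s, hpf0⟩ with hi₀
    refine ⟨w.coeff i₀ * D.z ^ (s / p ^ padicValNat p s), ?_, ?_⟩
    · by_cases h0 : w.coeff i₀ = 0
      · rw [h0, zero_mul, v_zero' D]
        exact le_top
      · rcases v_int D h0 with ⟨c, hc⟩
        have h6 : (↑(-(s:ℤ)) : WithTop ℤ) ≤ p ^ (n - 1 - (n - 1 - padicValNat p s)) • D.v (w.coeff i₀) :=
          hw' i₀
        rw [show n - 1 - (n - 1 - padicValNat p s) = padicValNat p s from by omega, hc, nsmul_coe',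
          WithTop.coe_le_coe] at h6
        have h7 : -(s:ℤ) ≤ (p:ℤ) ^ padicValNat p s * c := by exact_mod_cast h6
        have h8 : (0:ℤ) ≤ c + (((s / p ^ padicValNat p s) : ℕ) : ℤ) := by nlinarith [hpsZ, h7, hppowpos]
        rw [D.v_mul, hc, v_zpow D (s / p ^ padicValNat p s), ← WithTop.coe_add]
        exact_mod_cast h8
    · have hx' : w.coeff i₀ * D.z ^ (s / p ^ padicValNat p s) * (D.z ^ (s / p ^ padicValNat p s))⁻¹ = w.coeff i₀ := by
        rw [mul_assoc, mul_inv_cancel₀ hzeta, mul_one]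
      obtain ⟨a0, ha0⟩ : ∃ y : WittVector p L, y = WittVector.mk p
          (fun i => if h : i < n - 1 - padicValNat p s then w.coeff ⟨i, by omega⟩ else 0) := ⟨_, rfl⟩
      obtain ⟨t0, ht0⟩ : ∃ y : WittVector p L,
          y = WittVector.verschiebung^[n - 1 - padicValNat p s] (WittVector.teichmuller p (w.coeff i₀)) :=
        ⟨_, rfl⟩
      obtain ⟨d0, hd0⟩ : ∃ y : WittVector p L, y = WittVector.mk p
          (fun i => if h : n - padicValNat p s ≤ i ∧ i < n then w.coeff ⟨i, h.2⟩ else 0) := ⟨_, rfl⟩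
      have ht0c : ∀ i : ℕ, t0.coeff i = if i = n - 1 - padicValNat p s then w.coeff i₀ else 0 := by
        intro i
        rw [ht0]
        exact vtCoeff _ _ i
      have hdisj1 : ∀ i : ℕ, (a0 + t0).coeff i = a0.coeff i + t0.coeff i := by
        intro i
        apply WittVector.coeff_add_of_disjoint
        intro j
        by_cases h : j < n - 1 - padicValNat p s
        · right
          rw [ht0c j, if_neg (by omega)]
        · left
          rw [ha0]
          simp only [WittVector.coeff_mk]
          exact dif_neg h
      have hdisj2 : ∀ i : ℕ, (a0 + t0 + d0).coeff i = (a0 + t0).coeff i + d0.coeff i := by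
        intro i
        apply WittVector.coeff_add_of_disjoint
        intro j
        by_cases h : j < n - padicValNat p s
        · right
          rw [hd0]
          simp only [WittVector.coeff_mk]
          exact dif_neg (by omega)
        · left
          rw [hdisj1 j, ht0c j, if_neg (by omega), ha0]
          simp only [WittVector.coeff_mk]
          rw [dif_neg (by omega), add_zero]
      have htr : WittVector.truncate n (a0 + t0 + d0) = w := by
        apply TruncatedWittVector.ext
        intro i
        rw [WittVector.coeff_truncate, hdisj2 (i:ℕ), hdisj1 (i:ℕ), ht0c (i:ℕ), ha0, hd0]
        simp only [WittVector.coeff_mk]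
        have hi := i.isLt
        by_cases h1 : (i:ℕ) < n - 1 - padicValNat p s
        · rw [dif_pos h1, if_neg (show ¬((i:ℕ) = n - 1 - padicValNat p s) from by omega),
            dif_neg (show ¬(n - padicValNat p s ≤ (i:ℕ) ∧ (i:ℕ) < n) from by omega), add_zero, add_zero]
        · by_cases h2 : (i:ℕ) = n - 1 - padicValNat p s
          · rw [dif_neg (show ¬((i:ℕ) < n - 1 - padicValNat p s) from by omega), if_pos h2,
              dif_neg (show ¬(n - padicValNat p s ≤ (i:ℕ) ∧ (i:ℕ) < n) from by omega), add_zero, zero_add]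
            exact congrArg w.coeff (Fin.ext h2.symm)
          · rw [dif_neg (show ¬((i:ℕ) < n - 1 - padicValNat p s) from by omega), if_neg h2,
              dif_pos (show n - padicValNat p s ≤ (i:ℕ) ∧ (i:ℕ) < n from ⟨by omega, i.isLt⟩), zero_add,
              zero_add]
      have hkey : D.twMap p n s (w.coeff i₀ * D.z ^ (s / p ^ padicValNat p s)) = WittVector.truncate n t0 := by
        rw [twMap_eq D n s hMn (w.coeff i₀ * D.z ^ (s / p ^ padicValNat p s)), hx', ← ht0]
      rw [hkey, ← htr, ← map_sub, show a0 + t0 + d0 - t0 = a0 + d0 from by ring, map_add]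
      simp only [DVField.filKM, if_neg hs0, Set.mem_setOf_eq]
      set B : TruncatedWittVector p (min (padicValNat p s) n) L := TruncatedWittVector.mk p
        (fun j : Fin (min (padicValNat p s) n) => w.coeff ⟨n - (min (padicValNat p s) n) + (j:ℕ), by have := j.isLt; omega⟩) with hBdef
      have hgen : ∀ ii : Fin n, (ii:ℕ) < n - 1 - padicValNat p s →
          (↑(-((s - 1 : ℕ) : ℤ)) : WithTop ℤ) ≤ p ^ (n - 1 - (ii:ℕ)) • D.v (w.coeff ii) := by
        intro ii hii
        by_cases h0 : w.coeff ii = 0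
        · rw [h0, v_zero' D, nsmul_top' _ (pow_ne_zero _ hprime.ne_zero)]
          exact le_top
        · rcases v_int D h0 with ⟨c, hc⟩
          have h6 := hw' ii
          rw [hc, nsmul_coe', WithTop.coe_le_coe] at h6
          rw [hc, nsmul_coe', WithTop.coe_le_coe]
          have hne : ((p ^ (n - 1 - (ii:ℕ)) : ℕ) : ℤ) * c ≠ -(s:ℤ) := by
            intro hcontra
            have hdvd2 : ((p ^ (n - 1 - (ii:ℕ)) : ℕ) : ℤ) ∣ (s : ℤ) :=
              ⟨-c, by rw [mul_neg, hcontra, neg_neg]⟩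
            have hdvd3 : (p ^ (n - 1 - (ii:ℕ)) : ℕ) ∣ s := by exact_mod_cast hdvd2
            exact hnd (dvd_trans (pow_dvd_pow p (by omega)) hdvd3)
          have h10 : -(s:ℤ) < ((p ^ (n - 1 - (ii:ℕ)) : ℕ) : ℤ) * c :=
            lt_of_le_of_ne h6 (Ne.symm hne)
          rw [Nat.cast_sub hs]
          push_cast at h10 ⊢
          linarith
      refine ⟨WittVector.truncate n a0, ?_, B, ?_, ?_⟩
      · simp only [DVField.filLog, Set.mem_setOf_eq]
        intro i
        rw [WittVector.coeff_truncate, ha0]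
        simp only [WittVector.coeff_mk]
        by_cases h1 : (i:ℕ) < n - 1 - padicValNat p s
        · rw [dif_pos h1]
          exact hgen ⟨(i:ℕ), by omega⟩ h1
        · rw [dif_neg h1, v_zero' D, nsmul_top' _ (pow_ne_zero _ hprime.ne_zero)]
          exact le_top
      · simp only [DVField.filLog, Set.mem_setOf_eq]
        intro j
        rw [hBdef]
        simp only [TruncatedWittVector.coeff_mk]
        have h6 : (↑(-(s:ℤ)) : WithTop ℤ) ≤ p ^ (n - 1 - (n - (min (padicValNat p s) n) + (j:ℕ))) •
            D.v (w.coeff ⟨n - (min (padicValNat p s) n) + (j:ℕ), by have := j.isLt; omega⟩) := hw' _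
        rw [show n - 1 - (n - (min (padicValNat p s) n) + (j:ℕ)) = min (padicValNat p s) n - 1 - (j:ℕ) from by
          have := j.isLt; omega] at h6
        exact h6
      · have hd : WittVector.truncate n d0 = wVit B := by
          apply TruncatedWittVector.ext
          intro i
          rw [WittVector.coeff_truncate, hd0]
          unfold wVit
          rw [hBdef]
          simp only [WittVector.coeff_mk, TruncatedWittVector.coeff_mk]
          by_cases hcond : n - padicValNat p s ≤ (i:ℕ)
          · rw [dif_pos ⟨hcond, i.isLt⟩, dif_pos (show n - (min (padicValNat p s) n) ≤ (i:ℕ) ∧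
              (i:ℕ) - (n - (min (padicValNat p s) n)) < min (padicValNat p s) n from ⟨by omega, by have := i.isLt; omega⟩)]
            exact congrArg w.coeff (Fin.ext (by
              show (i:ℕ) = n - (min (padicValNat p s) n) + ((i:ℕ) - (n - (min (padicValNat p s) n)))
              omega))
          · rw [dif_neg (fun hh => hcond hh.1), dif_neg (by omega)]
        rw [hd]
  -- PART 4
  have part4 : ∀ x : L, 0 ≤ D.v x → (D.twMap p n s x ∈ D.filKM p s n ↔ 1 ≤ D.v x) := by
    intro x hx
    constructor
    · intro hmem
      by_cases hx0 : x = 0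
      · rw [hx0, v_zero' D]
        exact le_top
      · simp only [DVField.filKM, if_neg hs0, Set.mem_setOf_eq] at hmem
        obtain ⟨A, hA, B, hB, heq⟩ := hmem
        obtain ⟨A', hA'⟩ : ∃ y : WittVector p L, y = WittVector.mk p
            (fun i => if h : i < n then A.coeff ⟨i, h⟩ else 0) := ⟨_, rfl⟩
        obtain ⟨B', hB'⟩ : ∃ y : WittVector p L, y = WittVector.mk p
            (fun i => if h : i < n then (wVit B : TruncatedWittVector p n L).coeff ⟨i, h⟩
              else 0) := ⟨_, rfl⟩
        have htA : WittVector.truncate n A' = A := by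
          apply TruncatedWittVector.ext
          intro i
          rw [WittVector.coeff_truncate, hA']
          simp only [WittVector.coeff_mk]
          rw [dif_pos i.isLt]
        have htB : WittVector.truncate n B' = wVit B := by
          apply TruncatedWittVector.ext
          intro i
          rw [WittVector.coeff_truncate, hB']
          simp only [WittVector.coeff_mk]
          rw [dif_pos i.isLt]
        have heq2 : D.twMap p n s x = WittVector.truncate n (A' + B') := by
          rw [map_add, htA, htB]
          exact heq
        have hB'low : ∀ j : ℕ, j ≤ n - 1 - padicValNat p s → B'.coeff j = 0 := by
          intro j hj
          rw [hB']
          simp only [WittVector.coeff_mk]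
          by_cases hjn : j < n
          · rw [dif_pos hjn]
            unfold wVit
            simp only [TruncatedWittVector.coeff_mk]
            exact dif_neg (show ¬(n - (min (padicValNat p s) n) ≤ j ∧ j - (n - (min (padicValNat p s) n)) < min (padicValNat p s) n) from by omega)
          · exact dif_neg hjn
        have hcoeff : (A' + B').coeff (n - 1 - padicValNat p s) = A'.coeff (n - 1 - padicValNat p s) := by
          have hinit : WittVector.init (n - 1 - padicValNat p s + 1) B' = 0 := by
            apply WittVector.ext
            intro j
            rw [WittVector.zero_coeff]
            unfold WittVector.init WittVector.select
            simp only [WittVector.coeff_mk]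
            split_ifs with h
            · exact hB'low j (by omega)
            · rfl
          have h5 := WittVector.init_add A' B' (n - 1 - padicValNat p s + 1)
          rw [hinit, add_zero, WittVector.init_init] at h5
          have h6 := congrArg (fun y : WittVector p L => y.coeff (n - 1 - padicValNat p s)) h5
          unfold WittVector.init WittVector.select at h6
          simp only [WittVector.coeff_mk] at h6
          rw [if_pos (by omega), if_pos (by omega)] at h6
          exact h6
        have hpf : n - 1 - padicValNat p s < n := by omega
        have h7 : x * (D.z ^ (s / p ^ padicValNat p s))⁻¹ = A.coeff ⟨n - 1 - padicValNat p s, hpf⟩ :=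
          calc x * (D.z ^ (s / p ^ padicValNat p s))⁻¹
              = (D.twMap p n s x).coeff ⟨n - 1 - padicValNat p s, hpf⟩ := by
                rw [twMap_coeff D n s hMn x ⟨n - 1 - padicValNat p s, hpf⟩, if_pos rfl]
            _ = (A' + B').coeff (n - 1 - padicValNat p s) := by
                rw [heq2, WittVector.coeff_truncate]
            _ = A'.coeff (n - 1 - padicValNat p s) := hcoeff
            _ = A.coeff ⟨n - 1 - padicValNat p s, hpf⟩ := by
                rw [hA']
                simp only [WittVector.coeff_mk]
                rw [dif_pos hpf]
        rcases v_int D hx0 with ⟨c, hc⟩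
        have h9 : (↑(-((s - 1 : ℕ) : ℤ)) : WithTop ℤ) ≤
            p ^ (n - 1 - (n - 1 - padicValNat p s)) • D.v (A.coeff ⟨n - 1 - padicValNat p s, hpf⟩) := hA _
        rw [← h7, hvmul x hx0 c hc, show n - 1 - (n - 1 - padicValNat p s) = padicValNat p s from by omega,
          nsmul_coe', WithTop.coe_le_coe] at h9
        have h11 : (1:ℤ) ≤ ((p ^ padicValNat p s : ℕ) : ℤ) * c := by
          rw [Nat.cast_sub hs] at h9
          push_cast at h9 ⊢
          nlinarith [hpsZ, h9]
        have hc1 : (1:ℤ) ≤ c := by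
          by_contra hcon
          push_neg at hcon
          have h12 : ((p ^ padicValNat p s : ℕ) : ℤ) * c ≤ 0 :=
            mul_nonpos_of_nonneg_of_nonpos (by positivity) (by omega)
          linarith
        rw [hc]
        exact_mod_cast hc1
    · intro h1
      simp only [DVField.filKM, if_neg hs0, Set.mem_setOf_eq]
      refine ⟨D.twMap p n s x, ?_, 0, zero_mem_filLog D _ _, by rw [wVit_zero, add_zero]⟩
      simp only [DVField.filLog, Set.mem_setOf_eq]
      intro i
      rw [twMap_coeff D n s hMn x i]
      by_cases hi1 : (i:ℕ) = n - 1 - padicValNat p s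
      · rw [if_pos hi1]
        by_cases hx0 : x = 0
        · rw [hx0, zero_mul, v_zero' D, nsmul_top' _ (pow_ne_zero _ hprime.ne_zero)]
          exact le_top
        · rcases v_int D hx0 with ⟨c, hc⟩
          have hc1 : (1:ℤ) ≤ c := by
            rw [hc] at h1
            exact_mod_cast h1
          rw [hvmul x hx0 c hc, show n - 1 - (i:ℕ) = padicValNat p s from by omega, nsmul_coe',
            WithTop.coe_le_coe, Nat.cast_sub hs]
          have hpm : (1:ℤ) ≤ (p:ℤ) ^ padicValNat p s := hppowpos.le.trans_eq rfl |>.trans le_rfl |> fun _ => one_le_pow₀ (by exact_mod_cast hprime.one_lt.le)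
          push_cast
          nlinarith [hpsZ, hpm, hc1, mul_le_mul_of_nonneg_left hc1 (le_trans zero_le_one hpm)]
      · rw [if_neg hi1, v_zero' D, nsmul_top' _ (pow_ne_zero _ hprime.ne_zero)]
        exact le_top
  exact ⟨part1, part2, part3, part4⟩
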